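/- Let k, n ∈ ℕ and let π be a permutation of [k]. Then the number of ordered graphs G on [n] with maximum degree at most 1 and with φ(G) = π is at most C(n,2k)·Cat(k), where Cat(k) = C(2k,k)/(k+1) is the k-th Catalan number. -/

import Mathlib

/-- The ordered graph `G` on `[n]` has maximum degree at most 1. -/
def MaxDegLeOne {n : ℕ} (G : SimpleGraph (Fin n)) : Prop :=
  ∀ v : Fin n, (G.neighborSet v).ncard ≤ 1

/-- `φ(G) = π`, for an ordered graph `G` on `[n]` of maximum degree at most 1 with `k` edges:
writing the edges as `e_i = {a_i, b_i}` with `a_i < b_i` and `a_1 < … < a_k`, and letting `σ`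
be the permutation with `b_{σ(1)} < … < b_{σ(k)}`, we have `φ(G) = σ⁻¹`; equivalently
`b ∘ π⁻¹` is strictly increasing. -/
def PhiEq {n k : ℕ} (G : SimpleGraph (Fin n)) (π : Equiv.Perm (Fin k)) : Prop :=
  ∃ a b : Fin k → Fin n, StrictMono a ∧ (∀ i, a i < b i) ∧
    StrictMono (b ∘ ⇑π.symm) ∧
    ∀ u v : Fin n, G.Adj u v ↔ ∃ i : Fin k, (u = a i ∧ v = b i) ∨ (u = b i ∧ v = a i)

open Finset List DyckStep

namespace Stmt18

variable {n k : ℕ}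

/-- The set of left endpoints (range of `a`). -/
def AA (a : Fin k → Fin n) : Finset (Fin n) := Finset.image a Finset.univ

/-- The support: all endpoints. -/
def SS (a b : Fin k → Fin n) : Finset (Fin n) := AA a ∪ AA b

/-- The support, sorted increasingly. -/
def LL (a b : Fin k → Fin n) : List (Fin n) := (SS a b).sort (· ≤ ·)

/-- The step associated to a vertex: `U` if it is a left endpoint, else `D`. -/
def chi (a : Fin k → Fin n) (v : Fin n) : DyckStep := if v ∈ AA a then U else D

/-- The word associated to the matching. -/
def ww (a b : Fin k → Fin n) : List DyckStep := (LL a b).map (chi a)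

lemma mem_AA {a : Fin k → Fin n} {v : Fin n} : v ∈ AA a ↔ ∃ i, a i = v := by simp [AA]

variable {a b : Fin k → Fin n}

lemma disjAB (hdisj : ∀ i j, a i ≠ b j) : Disjoint (AA a) (AA b) := by
  rw [Finset.disjoint_left]
  rintro v hva hvb
  rw [mem_AA] at hva hvb
  obtain ⟨i, rfl⟩ := hva
  obtain ⟨j, hj⟩ := hvb
  exact hdisj i j hj.symm

lemma card_AA (ha : Function.Injective a) : (AA a).card = k := by
  rw [AA, Finset.card_image_of_injective _ ha, Finset.card_univ, Fintype.card_fin]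

lemma card_SS (ha : Function.Injective a) (hb : Function.Injective b)
    (hdisj : ∀ i j, a i ≠ b j) : (SS a b).card = 2 * k := by
  rw [SS, Finset.card_union_of_disjoint (disjAB hdisj), card_AA ha, card_AA hb, two_mul]

lemma mem_take_iff' {l : List (Fin n)} (hnd : l.Nodup) {v : Fin n} {i : ℕ} :
    v ∈ l.take i ↔ v ∈ l ∧ l.idxOf v < i := by
  constructor
  · intro hv
    obtain ⟨j, hj, hget⟩ := List.getElem_of_mem hv
    rw [List.getElem_take] at hget
    have hjl : j < l.length := by
      rw [List.length_take] at hj; omega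
    subst hget
    refine ⟨List.getElem_mem _, ?_⟩
    rw [List.Nodup.idxOf_getElem hnd]
    rw [List.length_take] at hj; omega
  · rintro ⟨hv, hi⟩
    have hlen : l.idxOf v < l.length := List.idxOf_lt_length_iff.2 hv
    have h2 : l.idxOf v < (l.take i).length := by rw [List.length_take]; omega
    have h3 : (l.take i)[l.idxOf v] = v := by
      rw [List.getElem_take, List.getElem_idxOf]
    exact h3 ▸ List.getElem_mem h2

lemma indexOf_lt_of_lt {l : List (Fin n)} (hl : l.Pairwise (· < ·))
    {x y : Fin n} (hx : x ∈ l) (hy : y ∈ l) (hxy : x < y) : l.idxOf x < l.idxOf y := by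
  have hxl : l.idxOf x < l.length := List.idxOf_lt_length_iff.2 hx
  have hyl : l.idxOf y < l.length := List.idxOf_lt_length_iff.2 hy
  by_contra hcon
  push_neg at hcon
  rcases eq_or_lt_of_le hcon with h | h
  · have hfin : (⟨l.idxOf x, hxl⟩ : Fin l.length) = ⟨l.idxOf y, hyl⟩ := Fin.ext h.symm
    have hxy' := congrArg l.get hfin
    simp only [List.get_eq_getElem, List.getElem_idxOf] at hxy'
    exact absurd hxy' (ne_of_lt hxy)
  · have hsm := hl.sortedLT.strictMono_get (show (⟨l.idxOf y, hyl⟩ : Fin l.length) < ⟨l.idxOf x, hxl⟩ from h)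
    simp only [List.get_eq_getElem, List.getElem_idxOf] at hsm
    exact absurd hxy (not_lt.2 hsm.le)

lemma countP_take_eq {l : List (Fin n)} (hnd : l.Nodup) (p : Fin n → Bool)
    (i : ℕ) :
    (l.take i).countP p = (l.toFinset.filter (fun v => p v = true ∧ l.idxOf v < i)).card := by
  rw [List.countP_eq_length_filter]
  have hnd' : ((l.take i).filter p).Nodup := ((l.take_sublist i).nodup hnd).filter p
  rw [← List.toFinset_card_of_nodup hnd']
  congr 1
  ext v
  simp only [List.mem_toFinset, List.mem_filter, Finset.mem_filter]
  rw [mem_take_iff' hnd]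
  tauto

lemma count_take_U (i : ℕ) :
    ((ww a b).take i).count U
      = ((AA a).filter (fun v => (LL a b).idxOf v < i)).card := by
  have hnd : (LL a b).Nodup := Finset.sort_nodup _ _
  have h1 : ((ww a b).take i).count U
      = ((LL a b).take i).countP (fun v => decide (v ∈ AA a)) := by
    rw [List.count_eq_countP, ww, ← List.map_take, List.countP_map]
    apply List.countP_congr
    intro v _
    by_cases h : v ∈ AA a <;> simp [chi, h, Function.comp]
  rw [h1, countP_take_eq hnd]
  congr 1
  ext v
  rw [Finset.mem_filter (s := AA a)]
  simp only [Finset.mem_filter, List.mem_toFinset, decide_eq_true_eq, LL, Finset.mem_sort]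
  constructor
  · rintro ⟨_, h1, h2⟩; exact ⟨h1, h2⟩
  · rintro ⟨h1, h2⟩; exact ⟨Finset.mem_union_left _ h1, h1, h2⟩

lemma count_take_D (hdisj : ∀ i j, a i ≠ b j) (i : ℕ) :
    ((ww a b).take i).count D
      = ((AA b).filter (fun v => (LL a b).idxOf v < i)).card := by
  have hnd : (LL a b).Nodup := Finset.sort_nodup _ _
  have h1 : ((ww a b).take i).count D
      = ((LL a b).take i).countP (fun v => !decide (v ∈ AA a)) := by
    rw [List.count_eq_countP, ww, ← List.map_take, List.countP_map]
    apply List.countP_congr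
    intro v _
    by_cases h : v ∈ AA a <;> simp [chi, h, Function.comp]
  rw [h1, countP_take_eq hnd]
  congr 1
  ext v
  rw [Finset.mem_filter (s := AA b)]
  simp only [Finset.mem_filter, List.mem_toFinset, Bool.not_eq_true', decide_eq_false_iff_not,
    LL, Finset.mem_sort]
  constructor
  · rintro ⟨hS, h1, h2⟩
    rcases Finset.mem_union.1 hS with h | h
    · exact absurd h h1
    · exact ⟨h, h2⟩
  · rintro ⟨h1, h2⟩
    refine ⟨Finset.mem_union_right _ h1, ?_, h2⟩
    intro hva
    rw [mem_AA] at hva h1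
    obtain ⟨i, rfl⟩ := hva
    obtain ⟨j, hj⟩ := h1
    exact hdisj i j hj.symm

lemma mem_LL_of_A {v : Fin n} (hv : v ∈ AA a) : v ∈ LL a b := by
  rw [LL, Finset.mem_sort]; exact Finset.mem_union_left _ hv

lemma mem_LL_of_B {v : Fin n} (hv : v ∈ AA b) : v ∈ LL a b := by
  rw [LL, Finset.mem_sort]; exact Finset.mem_union_right _ hv

lemma count_D_le (hainj : Function.Injective a) (hbinj : Function.Injective b)
    (hab : ∀ i, a i < b i) (hdisj : ∀ i j, a i ≠ b j) (i : ℕ) :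
    ((ww a b).take i).count D ≤ ((ww a b).take i).count U := by
  rw [count_take_U, count_take_D hdisj]
  have himg : ∀ (f : Fin k → Fin n), Function.Injective f →
      ((AA f).filter (fun v => (LL a b).idxOf v < i)).card
        = (Finset.univ.filter (fun j => (LL a b).idxOf (f j) < i)).card := by
    intro f hf
    have himg2 : (AA f).filter (fun v => (LL a b).idxOf v < i)
        = Finset.image f (Finset.univ.filter fun j => (LL a b).idxOf (f j) < i) := by
      ext v
      simp only [Finset.mem_filter, Finset.mem_image, Finset.mem_univ, true_and, AA]
      constructor
      · rintro ⟨⟨j, rfl⟩, h⟩; exact ⟨j, h, rfl⟩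
      · rintro ⟨j, h, rfl⟩; exact ⟨⟨j, rfl⟩, h⟩
    rw [himg2, Finset.card_image_of_injective _ hf]
  rw [himg a hainj, himg b hbinj]
  apply Finset.card_le_card
  intro j hj
  simp only [Finset.mem_filter, Finset.mem_univ, true_and] at hj ⊢
  have hma : a j ∈ LL a b := mem_LL_of_A (mem_AA.2 ⟨j, rfl⟩)
  have hmb : b j ∈ LL a b := mem_LL_of_B (mem_AA.2 ⟨j, rfl⟩)
  exact lt_trans (indexOf_lt_of_lt (Finset.sortedLT_sort _).pairwise hma hmb (hab j)) hj

lemma count_U_total (hainj : Function.Injective a) :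
    (ww a b).count U = k := by
  have hlen : (ww a b).length = (LL a b).length := by simp [ww]
  have h := count_take_U (a := a) (b := b) ((ww a b).length)
  rw [List.take_length] at h
  rw [h, Finset.filter_true_of_mem, card_AA hainj]
  intro v hv
  rw [hlen]
  exact List.idxOf_lt_length_iff.2 (mem_LL_of_A hv)

lemma count_D_total (hbinj : Function.Injective b) (hdisj : ∀ i j, a i ≠ b j) :
    (ww a b).count D = k := by
  have hlen : (ww a b).length = (LL a b).length := by simp [ww]
  have h := count_take_D (a := a) (b := b) hdisj ((ww a b).length)
  rw [List.take_length] at h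
  rw [h, Finset.filter_true_of_mem, card_AA hbinj]
  intro v hv
  rw [hlen]
  exact List.idxOf_lt_length_iff.2 (mem_LL_of_B hv)

lemma disj_of_deg {G : SimpleGraph (Fin n)} (hdeg : MaxDegLeOne G)
    (hab : ∀ i, a i < b i)
    (hadj : ∀ u v, G.Adj u v ↔ ∃ i : Fin k, (u = a i ∧ v = b i) ∨ (u = b i ∧ v = a i)) :
    ∀ i j, a i ≠ b j := by
  intro i j h
  have h1 : b i ∈ G.neighborSet (a i) := by
    rw [SimpleGraph.mem_neighborSet, hadj]; exact ⟨i, Or.inl ⟨rfl, rfl⟩⟩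
  have h2 : a j ∈ G.neighborSet (a i) := by
    rw [SimpleGraph.mem_neighborSet, hadj]; exact ⟨j, Or.inr ⟨h, rfl⟩⟩
  have hne : b i ≠ a j := by
    have h3 := hab i
    have h4 := hab j
    rw [h] at h3
    exact ne_of_gt (lt_trans h4 h3)
  have hsub : ({b i, a j} : Set (Fin n)) ⊆ G.neighborSet (a i) := by
    intro x hx
    rcases Set.mem_insert_iff.1 hx with rfl | hx
    · exact h1
    · rw [Set.mem_singleton_iff] at hx; subst hx; exact h2
  have hcard := Set.ncard_le_ncard hsub (Set.toFinite _)
  rw [Set.ncard_pair hne] at hcard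
  have := hdeg (a i)
  omega

lemma recover (π : Equiv.Perm (Fin k)) {G G' : SimpleGraph (Fin n)}
    {a b a' b' : Fin k → Fin n}
    (ha : StrictMono a) (hab : ∀ i, a i < b i) (hbm : StrictMono (b ∘ ⇑π.symm))
    (hadj : ∀ u v, G.Adj u v ↔ ∃ i : Fin k, (u = a i ∧ v = b i) ∨ (u = b i ∧ v = a i))
    (hdisj : ∀ i j, a i ≠ b j)
    (ha' : StrictMono a') (hab' : ∀ i, a' i < b' i) (hbm' : StrictMono (b' ∘ ⇑π.symm))
    (hadj' : ∀ u v, G'.Adj u v ↔ ∃ i : Fin k, (u = a' i ∧ v = b' i) ∨ (u = b' i ∧ v = a' i))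
    (hdisj' : ∀ i j, a' i ≠ b' j)
    (hS : SS a b = SS a' b') (hw : ww a b = ww a' b') : G = G' := by
  have hbinj : Function.Injective b := by
    intro x y hxy
    have : (b ∘ ⇑π.symm) (π x) = (b ∘ ⇑π.symm) (π y) := by simp [hxy]
    have := hbm.injective this
    exact π.injective this
  have hbinj' : Function.Injective b' := by
    intro x y hxy
    have : (b' ∘ ⇑π.symm) (π x) = (b' ∘ ⇑π.symm) (π y) := by simp [hxy]
    have := hbm'.injective this
    exact π.injective this
  have hL : LL a b = LL a' b' := by rw [LL, LL, hS]
  have hchi : ∀ v ∈ LL a b, chi a v = chi a' v := by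
    have hw2 := hw
    rw [ww, ww, ← hL] at hw2
    exact List.map_inj_left.1 hw2
  have hAA : AA a = AA a' := by
    ext v
    constructor
    · intro hv
      have hc := hchi v (mem_LL_of_A hv)
      by_contra hcon
      rw [chi, chi, if_pos hv, if_neg hcon] at hc
      exact absurd hc (by simp)
    · intro hv
      have hvL : v ∈ LL a b := by
        rw [hL]; exact mem_LL_of_A hv
      have hc := hchi v hvL
      by_contra hcon
      rw [chi, chi, if_neg hcon, if_pos hv] at hc
      exact absurd hc (by simp)
  have hka : (AA a).card = k := card_AA ha.injective
  have haa : a = a' := by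
    have h1 : a = ⇑((AA a).orderEmbOfFin hka) :=
      Finset.orderEmbOfFin_unique hka (fun i => mem_AA.2 ⟨i, rfl⟩) ha
    have h2 : a' = ⇑((AA a).orderEmbOfFin hka) :=
      Finset.orderEmbOfFin_unique hka (fun i => by rw [hAA]; exact mem_AA.2 ⟨i, rfl⟩) ha'
    rw [h1, h2]
  have hBB : AA b = AA b' := by
    have e1 : AA b = SS a b \ AA a := by
      rw [SS, Finset.union_sdiff_cancel_left (disjAB hdisj)]
    have e2 : AA b' = SS a' b' \ AA a' := by
      rw [SS, Finset.union_sdiff_cancel_left (disjAB hdisj')]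
    rw [e1, e2, hS, hAA]
  have hkb : (AA b).card = k := card_AA hbinj
  have hbb : b = b' := by
    have h1 : b ∘ ⇑π.symm = ⇑((AA b).orderEmbOfFin hkb) :=
      Finset.orderEmbOfFin_unique hkb (fun i => mem_AA.2 ⟨π.symm i, rfl⟩) hbm
    have h2 : b' ∘ ⇑π.symm = ⇑((AA b).orderEmbOfFin hkb) :=
      Finset.orderEmbOfFin_unique hkb (fun i => by rw [hBB]; exact mem_AA.2 ⟨π.symm i, rfl⟩) hbm'
    funext x
    have := congrFun (h1.trans h2.symm) (π x)
    simpa using this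
  ext u v
  rw [hadj, hadj', haa, hbb]

variable (π : Equiv.Perm (Fin k))

/-- Choice of `a` from a `PhiEq` witness. -/
noncomputable def wa {G : SimpleGraph (Fin n)} (h : PhiEq G π) : Fin k → Fin n := h.choose

/-- Choice of `b` from a `PhiEq` witness. -/
noncomputable def wb {G : SimpleGraph (Fin n)} (h : PhiEq G π) : Fin k → Fin n :=
  h.choose_spec.choose

lemma wspec {G : SimpleGraph (Fin n)} (h : PhiEq G π) :
    StrictMono (wa π h) ∧ (∀ i, wa π h i < wb π h i) ∧ StrictMono (wb π h ∘ ⇑π.symm) ∧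
    ∀ u v : Fin n, G.Adj u v ↔
      ∃ i : Fin k, (u = wa π h i ∧ v = wb π h i) ∨ (u = wb π h i ∧ v = wa π h i) :=
  h.choose_spec.choose_spec

lemma wb_inj {G : SimpleGraph (Fin n)} (h : PhiEq G π) : Function.Injective (wb π h) := by
  intro x y hxy
  have h1 : (wb π h ∘ ⇑π.symm) (π x) = (wb π h ∘ ⇑π.symm) (π y) := by simp [hxy]
  exact π.injective ((wspec π h).2.2.1.injective h1)

lemma wdisj {G : SimpleGraph (Fin n)} (hdeg : MaxDegLeOne G) (h : PhiEq G π) :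
    ∀ i j, wa π h i ≠ wb π h j :=
  disj_of_deg hdeg (wspec π h).2.1 (wspec π h).2.2.2

/-- The encoding map. -/
noncomputable def enc
    (Gp : {G : SimpleGraph (Fin n) | MaxDegLeOne G ∧ PhiEq G π}) :
    {S : Finset (Fin n) // S.card = 2 * k} × {p : DyckWord // p.semilength = k} :=
  ⟨⟨SS (wa π Gp.2.2) (wb π Gp.2.2),
      card_SS (wspec π Gp.2.2).1.injective (wb_inj π Gp.2.2) (wdisj π Gp.2.1 Gp.2.2)⟩,
    ⟨⟨ww (wa π Gp.2.2) (wb π Gp.2.2),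
      by rw [count_U_total (wspec π Gp.2.2).1.injective,
             count_D_total (wb_inj π Gp.2.2) (wdisj π Gp.2.1 Gp.2.2)],
      fun i => count_D_le (wspec π Gp.2.2).1.injective (wb_inj π Gp.2.2)
        (wspec π Gp.2.2).2.1 (wdisj π Gp.2.1 Gp.2.2) i⟩,
      count_U_total (wspec π Gp.2.2).1.injective⟩⟩

lemma enc_inj : Function.Injective (enc (n := n) (k := k) π) := by
  rintro ⟨G, hG⟩ ⟨G', hG'⟩ h
  simp only [enc, Prod.mk.injEq, Subtype.mk.injEq, DyckWord.mk.injEq] at h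
  obtain ⟨hS, hw⟩ := h
  have s1 := wspec π hG.2
  have s2 := wspec π hG'.2
  exact Subtype.ext (recover π s1.1 s1.2.1 s1.2.2.1 s1.2.2.2 (wdisj π hG.1 hG.2)
    s2.1 s2.2.1 s2.2.2.1 s2.2.2.2 (wdisj π hG'.1 hG'.2) hS (congrArg (fun p : {p : DyckWord // p.semilength = k} => p.1.toList) hw))

end Stmt18

theorem stmt18 (k n : ℕ) (π : Equiv.Perm (Fin k)) :
    ({G : SimpleGraph (Fin n) | MaxDegLeOne G ∧ PhiEq G π}).ncard ≤
      n.choose (2 * k) * ((2 * k).choose k / (k + 1)) := by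
  classical
  have h1 := Nat.card_le_card_of_injective _ (Stmt18.enc_inj (n := n) (k := k) π)
  rw [Nat.card_coe_set_eq] at h1
  rw [Nat.card_eq_fintype_card, Fintype.card_prod, Fintype.card_finset_len, Fintype.card_fin,
      DyckWord.card_dyckWord_semilength_eq_catalan, catalan_eq_centralBinom_div] at h1
  exact h1
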